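/- For the copulas C_n(u,v) = uv + (1−cos(2πu))(1−cos(2πnv))/(8π²n) and Π(u,v) = uv, the L¹ distance of their densities satisfies ∫∫_{[0,1]²} |c_n(u,v) − 1| du dv = 2/π² for every n ≥ 1, where c_n(u,v) = 1 + (1/2)sin(2πu)sin(2πnv). In particular this distance does not tend to 0. -/

import Mathlib

open Set

/-- The copula C_n(u,v) = uv + (1−cos(2πu))(1−cos(2πnv))/(8π²n). -/
noncomputable def Cn (n : ℕ) (u v : ℝ) : ℝ :=
  u * v + (1 - Real.cos (2 * Real.pi * u)) * (1 - Real.cos (2 * Real.pi * n * v))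
    / (8 * Real.pi ^ 2 * n)

/-- The density c_n(u,v) = 1 + (1/2)sin(2πu)sin(2πnv). -/
noncomputable def cn (n : ℕ) (u v : ℝ) : ℝ :=
  1 + (1/2) * Real.sin (2 * Real.pi * u) * Real.sin (2 * Real.pi * n * v)

lemma abs_sin_cont : Continuous (fun x : ℝ => |Real.sin (2 * Real.pi * x)|) :=
  (Real.continuous_sin.comp (continuous_const.mul continuous_id)).abs

lemma abs_sin_periodic : Function.Periodic (fun x : ℝ => |Real.sin (2 * Real.pi * x)|) 1 := by
  intro x
  simp only [mul_add, mul_one]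
  rw [Real.sin_add_two_pi]

lemma abs_sin_half_periodic :
    Function.Periodic (fun x : ℝ => |Real.sin (2 * Real.pi * x)|) (1/2) := by
  intro x
  have : 2 * Real.pi * (x + 1/2) = 2 * Real.pi * x + Real.pi := by ring
  simp only [this, Real.sin_add_pi, abs_neg]

lemma integral_abs_sin_base :
    ∫ t in (0:ℝ)..1, |Real.sin (2 * Real.pi * t)| = 2 / Real.pi := by
  have hhalf : ∫ t in (0:ℝ)..(1/2), |Real.sin (2 * Real.pi * t)| = 1 / Real.pi := by
    have hcongr : ∫ t in (0:ℝ)..(1/2), |Real.sin (2 * Real.pi * t)|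
        = ∫ t in (0:ℝ)..(1/2), Real.sin (2 * Real.pi * t) := by
      apply intervalIntegral.integral_congr
      intro x hx
      rw [Set.uIcc_of_le (by norm_num : (0:ℝ) ≤ 1/2)] at hx
      refine abs_of_nonneg (Real.sin_nonneg_of_nonneg_of_le_pi ?_ ?_)
      · nlinarith [Real.pi_pos, hx.1]
      · nlinarith [Real.pi_pos, hx.2]
    rw [hcongr]
    have := intervalIntegral.integral_comp_mul_left (a := (0:ℝ)) (b := 1/2)
      (f := Real.sin) (c := 2 * Real.pi) (by positivity)
    rw [this]
    simp only [mul_zero, integral_sin, smul_eq_mul]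
    have : 2 * Real.pi * (1/2) = Real.pi := by ring
    rw [this, Real.cos_pi, Real.cos_zero]
    field_simp
    norm_num
  have hsecond : ∫ t in (1/2:ℝ)..1, |Real.sin (2 * Real.pi * t)| = 1 / Real.pi := by
    have := abs_sin_half_periodic.intervalIntegral_add_eq (1/2 : ℝ) 0
    norm_num at this
    rw [this, hhalf]
  have hsplit : ∫ t in (0:ℝ)..1, |Real.sin (2 * Real.pi * t)|
      = (∫ t in (0:ℝ)..(1/2), |Real.sin (2 * Real.pi * t)|)
        + ∫ t in (1/2:ℝ)..1, |Real.sin (2 * Real.pi * t)| :=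
    (intervalIntegral.integral_add_adjacent_intervals
      (abs_sin_cont.intervalIntegrable _ _) (abs_sin_cont.intervalIntegrable _ _)).symm
  rw [hsplit, hhalf, hsecond]
  ring

lemma integral_abs_sin (n : ℕ) (hn : 1 ≤ n) :
    ∫ t in (0:ℝ)..1, |Real.sin (2 * Real.pi * n * t)| = 2 / Real.pi := by
  have hn0 : (n : ℝ) ≠ 0 := Nat.cast_ne_zero.mpr (by omega)
  have h1 : ∫ t in (0:ℝ)..1, |Real.sin (2 * Real.pi * n * t)|
      = ∫ t in (0:ℝ)..1, (fun x : ℝ => |Real.sin (2 * Real.pi * x)|) ((n:ℝ) * t) := by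
    apply intervalIntegral.integral_congr
    intro x _
    simp only
    ring_nf
  have h2 := intervalIntegral.integral_comp_mul_left (a := (0:ℝ)) (b := 1)
    (f := fun x : ℝ => |Real.sin (2 * Real.pi * x)|) (c := (n:ℝ)) hn0
  rw [h1, h2]
  have hper : ∫ x in (0:ℝ)..(n:ℝ), |Real.sin (2 * Real.pi * x)| = (n:ℝ) * (2 / Real.pi) := by
    have := abs_sin_periodic.intervalIntegral_add_zsmul_eq (n : ℤ) 0
      (fun t₁ t₂ => abs_sin_cont.intervalIntegrable _ _)
    simp only [zero_add, zsmul_eq_mul, Int.cast_natCast, mul_one, smul_eq_mul] at this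
    rw [this, integral_abs_sin_base]
  rw [mul_zero, mul_one, hper, smul_eq_mul]
  field_simp

/-- The L¹ distance between the density of C_n and the density 1 of Π equals 2/π²
for every n ≥ 1; in particular it does not tend to 0. -/
theorem Cn_density_L1_distance :
    (∀ n : ℕ, 1 ≤ n →
      (∫ u in (0:ℝ)..1, ∫ v in (0:ℝ)..1, |cn n u v - 1|) = 2 / Real.pi ^ 2) ∧
    ¬ Filter.Tendsto (fun n : ℕ => ∫ u in (0:ℝ)..1, ∫ v in (0:ℝ)..1, |cn n u v - 1|)
      Filter.atTop (nhds 0) := by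
  have hmain : ∀ n : ℕ, 1 ≤ n →
      (∫ u in (0:ℝ)..1, ∫ v in (0:ℝ)..1, |cn n u v - 1|) = 2 / Real.pi ^ 2 := by
    intro n hn
    have hinner : ∀ u : ℝ, (∫ v in (0:ℝ)..1, |cn n u v - 1|)
        = |Real.sin (2 * Real.pi * u)| * (1 / Real.pi) := by
      intro u
      have h1 : ∀ v : ℝ, |cn n u v - 1|
          = ((1/2) * |Real.sin (2 * Real.pi * u)|) * |Real.sin (2 * Real.pi * n * v)| := by
        intro v
        simp only [cn]
        rw [add_sub_cancel_left, abs_mul, abs_mul]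
        norm_num
      simp_rw [h1]
      rw [intervalIntegral.integral_const_mul, integral_abs_sin n hn]
      have hpi := Real.pi_ne_zero
      field_simp
    simp_rw [hinner]
    rw [intervalIntegral.integral_mul_const, integral_abs_sin_base]
    have hpi := Real.pi_ne_zero
    field_simp
  refine ⟨hmain, ?_⟩
  intro h
  have heq : (fun n : ℕ => ∫ u in (0:ℝ)..1, ∫ v in (0:ℝ)..1, |cn n u v - 1|)
      =ᶠ[Filter.atTop] (fun _ => 2 / Real.pi ^ 2) := by
    filter_upwards [Filter.eventually_ge_atTop 1] with n hn
    exact hmain n hn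
  have h2 : Filter.Tendsto (fun _ : ℕ => 2 / Real.pi ^ 2) Filter.atTop (nhds 0) :=
    h.congr' heq
  have h3 : (2 : ℝ) / Real.pi ^ 2 = 0 := tendsto_nhds_unique tendsto_const_nhds h2
  have := Real.pi_ne_zero
  field_simp at h3
  norm_num at h3
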